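/- Let G be a connected finite graph with a shortest path v_0,...,v_t of eccentricity k (every vertex of G is within distance k of some v_i). Let P = x_0,...,x_s be any shortest path in G, and let i_min (resp. i_max) be the smallest (resp. largest) index i such that d(v_i, P) ≤ k. Then for every i with i_min ≤ i ≤ i_max, d(v_i, P) ≤ 2k. -/
import Mathlib


open SimpleGraph

variable {V : Type*}

/-- Distance from a vertex `x` to (the support of) a walk `p`. -/
noncomputable def walkDist (G : SimpleGraph V) {u v : V} (x : V) (p : G.Walk u v) : ℕ :=
  sInf {n | ∃ w ∈ p.support, G.dist x w = n}

/-- A walk is a shortest path when its length equals the distance between its ends. -/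
noncomputable def IsShortestPath (G : SimpleGraph V) {u v : V} (p : G.Walk u v) : Prop :=
  p.length = G.dist u v

/-- Eccentricity of a walk: the largest distance from any vertex to the walk. -/
noncomputable def walkEcc [Fintype V] (G : SimpleGraph V) {u v : V} (p : G.Walk u v) : ℕ :=
  sSup {n | ∃ x : V, walkDist G x p = n}

/-- A diameter: a shortest path of maximum length among all distances. -/
noncomputable def IsDiameter [Fintype V] (G : SimpleGraph V) {u v : V} (p : G.Walk u v) : Prop :=
  IsShortestPath G p ∧ ∀ a b : V, G.dist a b ≤ p.length

/-- `k(G)`: minimum eccentricity over all shortest paths. -/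
noncomputable def minK [Fintype V] (G : SimpleGraph V) : ℕ :=
  sInf {n | ∃ (u v : V) (p : G.Walk u v), IsShortestPath G p ∧ walkEcc G p = n}

/-- `l(G)`: minimum eccentricity over all diameters. -/
noncomputable def minL [Fintype V] (G : SimpleGraph V) : ℕ :=
  sInf {n | ∃ (u v : V) (p : G.Walk u v), IsDiameter G p ∧ walkEcc G p = n}

/-- `s(G)`: maximum eccentricity over all diameters. -/
noncomputable def maxS [Fintype V] (G : SimpleGraph V) : ℕ :=
  sSup {n | ∃ (u v : V) (p : G.Walk u v), IsDiameter G p ∧ walkEcc G p = n}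



private lemma getVert_mem_support' {G : SimpleGraph V} {u v : V} (p : G.Walk u v) (i : ℕ) :
    p.getVert i ∈ p.support := by
  rcases le_or_gt p.length i with h | h
  · rw [p.getVert_of_length_le h]; exact p.end_mem_support
  · exact SimpleGraph.Walk.mem_support_iff_exists_getVert.mpr ⟨i, rfl, h.le⟩

private lemma dist_getVert_le {G : SimpleGraph V} (hG : G.Connected) {u v : V}
    (p : G.Walk u v) (i n : ℕ) :
    G.dist (p.getVert i) (p.getVert (i + n)) ≤ n := by
  induction n with
  | zero => simp
  | succ n ih =>
    rcases le_or_gt p.length (i + n) with h | h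
    · have h2 : p.getVert (i + (n+1)) = p.getVert (i + n) := by
        rw [p.getVert_of_length_le h, p.getVert_of_length_le (by omega)]
      rw [h2]; omega
    · have hadj := p.adj_getVert_succ h
      have h1 : G.dist (p.getVert (i+n)) (p.getVert (i+n+1)) ≤ 1 := by
        have := SimpleGraph.dist_le hadj.toWalk
        simpa using this
      have h3 := hG.dist_triangle (u := p.getVert i) (v := p.getVert (i+n)) (w := p.getVert (i+n+1))
      have h4 : G.dist (p.getVert i) (p.getVert (i + (n+1))) ≤
          G.dist (p.getVert i) (p.getVert (i+n)) + 1 := by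
        rw [show i + (n+1) = i + n + 1 from rfl]
        omega
      omega

private lemma dist_getVert_le' {G : SimpleGraph V} (hG : G.Connected) {u v : V}
    (p : G.Walk u v) (i j : ℕ) :
    G.dist (p.getVert i) (p.getVert j) ≤ max i j - min i j := by
  rcases le_total i j with h | h
  · have := dist_getVert_le hG p i (j - i)
    rw [show i + (j - i) = j by omega] at this
    simpa [Nat.max_eq_right h, Nat.min_eq_left h] using this
  · have := dist_getVert_le hG p j (i - j)
    rw [show j + (i - j) = i by omega, SimpleGraph.dist_comm] at this
    simpa [Nat.max_eq_left h, Nat.min_eq_right h] using this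

/-- On a shortest path, the index difference is a lower bound for distance. -/
private lemma dist_getVert_ge {G : SimpleGraph V} (hG : G.Connected) {u v : V}
    (p : G.Walk u v) (hp : p.length = G.dist u v) {i j : ℕ}
    (hi : i ≤ p.length) (hj : j ≤ p.length) :
    max i j - min i j ≤ G.dist (p.getVert i) (p.getVert j) := by
  wlog hij : i ≤ j generalizing i j
  · rw [SimpleGraph.dist_comm]
    have := this hj hi (by omega)
    omega
  have h1 : G.dist u (p.getVert i) ≤ i := by
    have := dist_getVert_le hG p 0 i
    simpa using this
  have h2 : G.dist (p.getVert j) v ≤ p.length - j := by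
    have := dist_getVert_le hG p j (p.length - j)
    rw [show j + (p.length - j) = p.length by omega, p.getVert_length] at this
    exact this
  have h3 := hG.dist_triangle (u := u) (v := p.getVert i) (w := p.getVert j)
  have h4 := hG.dist_triangle (u := u) (v := p.getVert j) (w := v)
  omega

/-- Discrete intermediate value: a chain with steps ≤ 2k+1 passes within k of every
intermediate value. -/
private lemma chain_ivt (k : ℕ) (a : ℕ → ℕ) : ∀ N i, a 0 ≤ i → i ≤ a N →
    (∀ n < N, a (n+1) ≤ a n + (2*k+1) ∧ a n ≤ a (n+1) + (2*k+1)) →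
    ∃ n ≤ N, a n ≤ i + k ∧ i ≤ a n + k := by
  intro N
  induction N with
  | zero => intro i h0 h1 _; exact ⟨0, le_refl _, by omega, by omega⟩
  | succ N ih =>
    intro i h0 h1 hstep
    rcases le_or_gt (a N) i with h | h
    · have hd := hstep N (by omega)
      rcases le_or_gt i (a N + k) with h2 | h2
      · exact ⟨N, by omega, by omega, by omega⟩
      · exact ⟨N + 1, le_refl _, by omega, by omega⟩
    · obtain ⟨n, hn, hb⟩ := ih i h0 h.le (fun n hn => hstep n (by omega))
      exact ⟨n, by omega, hb⟩

private lemma walkDist_le_of {G : SimpleGraph V} {u v : V} {p : G.Walk u v} {x w : V}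
    (hw : w ∈ p.support) {n : ℕ} (h : G.dist x w ≤ n) : walkDist G x p ≤ n :=
  le_trans (Nat.sInf_le ⟨w, hw, rfl⟩) h

private lemma exists_of_walkDist_le {G : SimpleGraph V} {u v : V} {p : G.Walk u v} {x : V}
    {n : ℕ} (h : walkDist G x p ≤ n) : ∃ w ∈ p.support, G.dist x w ≤ n := by
  have hne : walkDist G x p ∈ {m | ∃ w ∈ p.support, G.dist x w = m} :=
    Nat.sInf_mem ⟨G.dist x u, u, p.start_mem_support, rfl⟩
  obtain ⟨w, hw, hd⟩ := hne
  exact ⟨w, hw, by omega⟩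

theorem stmt0 [Fintype V] (G : SimpleGraph V) (hG : G.Connected)
    {v0 vt x0 xs : V} (P : G.Walk v0 vt) (hP : IsShortestPath G P) (k : ℕ)
    (hecc : ∀ z : V, walkDist G z P ≤ k)
    (Q : G.Walk x0 xs) (hQ : IsShortestPath G Q)
    (imin imax : ℕ)
    (himin1 : imin ≤ P.length) (himin2 : walkDist G (P.getVert imin) Q ≤ k)
    (himin3 : ∀ i < imin, ¬ walkDist G (P.getVert i) Q ≤ k)
    (himax1 : imax ≤ P.length) (himax2 : walkDist G (P.getVert imax) Q ≤ k)
    (himax3 : ∀ i, i ≤ P.length → imax < i → ¬ walkDist G (P.getVert i) Q ≤ k) :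
    ∀ i, imin ≤ i → i ≤ imax → walkDist G (P.getVert i) Q ≤ 2 * k := by
  intro i hi1 hi2
  -- for each index j on Q, a nearby index on P
  have hm : ∀ j : ℕ, ∃ mj : ℕ, mj ≤ P.length ∧
      G.dist (Q.getVert j) (P.getVert mj) ≤ k := by
    intro j
    obtain ⟨w, hw, hd⟩ := exists_of_walkDist_le (hecc (Q.getVert j))
    obtain ⟨mj, hmj, hmj2⟩ := SimpleGraph.Walk.mem_support_iff_exists_getVert.mp hw
    exact ⟨mj, hmj2, by rw [hmj]; exact hd⟩
  choose m hm1 hm2 using hm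
  -- witnesses on Q near v_imin and v_imax
  obtain ⟨wmin, hwmin, hdmin⟩ := exists_of_walkDist_le himin2
  obtain ⟨jmin, hjmin, hjmin2⟩ := SimpleGraph.Walk.mem_support_iff_exists_getVert.mp hwmin
  obtain ⟨wmax, hwmax, hdmax⟩ := exists_of_walkDist_le himax2
  obtain ⟨jmax, hjmax, hjmax2⟩ := SimpleGraph.Walk.mem_support_iff_exists_getVert.mp hwmax
  rw [← hjmin] at hdmin
  rw [← hjmax] at hdmax
  -- traverse Q from jmin to jmax
  set M : ℕ := max jmin jmax - min jmin jmax with hM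
  set c : ℕ → ℕ := fun n => if jmin ≤ jmax then jmin + n else jmin - n with hc
  have hc0 : c 0 = jmin := by simp [hc]
  have hcM : c M = jmax := by
    by_cases h : jmin ≤ jmax
    · simp only [hc, if_pos h, hM]; omega
    · simp only [hc, if_neg h, hM]; omega
  have hcstep : ∀ n < M, G.dist (Q.getVert (c n)) (Q.getVert (c (n+1))) ≤ 1 := by
    intro n hn
    have hb := dist_getVert_le' hG Q (c n) (c (n+1))
    rw [hM] at hn
    by_cases h : jmin ≤ jmax
    · simp only [hc, if_pos h] at hb ⊢
      omega
    · simp only [hc, if_neg h] at hb ⊢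
      omega
  -- the chain of indices on P
  set N : ℕ := M + 2 with hN
  set a : ℕ → ℕ := fun n => if n = 0 then imin else if n ≤ M + 1 then m (c (n-1)) else imax
    with ha
  have ha0 : a 0 = imin := by simp [ha]
  have haN : a N = imax := by simp [ha, hN]
  have haMid : ∀ n, n ≠ 0 → n ≤ M + 1 → a n = m (c (n - 1)) := by
    intro n h0 h1
    simp only [ha]
    rw [if_neg h0, if_pos h1]
  have haBig : ∀ n, n ≠ 0 → ¬ n ≤ M + 1 → a n = imax := by
    intro n h0 h1
    simp only [ha]
    rw [if_neg h0, if_neg h1]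
  have haLen : ∀ n, a n ≤ P.length := by
    intro n
    by_cases h0 : n = 0
    · simp [ha, h0, himin1]
    · by_cases h1 : n ≤ M + 1
      · rw [haMid n h0 h1]; exact hm1 _
      · rw [haBig n h0 h1]; exact himax1
  -- each chain index is within k of some vertex of Q
  have haNear : ∀ n ≤ N, ∃ j, G.dist (P.getVert (a n)) (Q.getVert j) ≤ k := by
    intro n _
    by_cases h0 : n = 0
    · exact ⟨jmin, by simpa [ha, h0] using hdmin⟩
    · by_cases h1 : n ≤ M + 1
      · refine ⟨c (n-1), ?_⟩
        rw [haMid n h0 h1, SimpleGraph.dist_comm]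
        exact hm2 (c (n-1))
      · exact ⟨jmax, by rw [haBig n h0 h1]; exact hdmax⟩
  -- consecutive chain indices differ by at most 2k+1
  have hstep : ∀ n < N, a (n+1) ≤ a n + (2*k+1) ∧ a n ≤ a (n+1) + (2*k+1) := by
    intro n hn
    have hkey : G.dist (P.getVert (a n)) (P.getVert (a (n+1))) ≤ 2*k+1 := by
      by_cases h0 : n = 0
      · -- imin to m jmin
        subst h0
        have h1 : a 1 = m (c 0) := haMid 1 one_ne_zero (by omega)
        rw [ha0, h1, hc0]
        have t1 := hG.dist_triangle (u := P.getVert imin) (v := Q.getVert jmin)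
          (w := P.getVert (m jmin))
        have d1 := hm2 jmin
        have e1 : G.dist (Q.getVert jmin) (P.getVert (m jmin))
            = G.dist (P.getVert (m jmin)) (Q.getVert jmin) := SimpleGraph.dist_comm ..
        omega
      · by_cases h1 : n ≤ M
        · -- m (c (n-1)) to m (c n)
          have e1 : a n = m (c (n-1)) := haMid n h0 (by omega)
          have e2 : a (n+1) = m (c n) := by
            rw [haMid (n+1) (by omega) (by omega), Nat.add_sub_cancel]
          rw [e1, e2]
          have hq := hcstep (n-1) (by omega)
          rw [show n - 1 + 1 = n by omega] at hq
          have d1 := hm2 (c (n-1))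
          have d2 := hm2 (c n)
          have t1 := hG.dist_triangle (u := P.getVert (m (c (n-1)))) (v := Q.getVert (c (n-1)))
            (w := P.getVert (m (c n)))
          have t2 := hG.dist_triangle (u := Q.getVert (c (n-1))) (v := Q.getVert (c n))
            (w := P.getVert (m (c n)))
          have e3 : G.dist (P.getVert (m (c (n-1)))) (Q.getVert (c (n-1)))
              = G.dist (Q.getVert (c (n-1))) (P.getVert (m (c (n-1)))) := SimpleGraph.dist_comm ..
          omega
        · -- n = M + 1 : m jmax to imax
          have hn1 : n = M + 1 := by omega
          have e1 : a n = m (c (n-1)) := haMid n h0 (by omega)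
          have e1' : c (n-1) = jmax := by rw [show n - 1 = M by omega, hcM]
          have e2 : a (n+1) = imax := haBig (n+1) (by omega) (by omega)
          rw [e1, e1', e2]
          have d1 := hm2 jmax
          have t1 := hG.dist_triangle (u := P.getVert (m jmax)) (v := Q.getVert jmax)
            (w := P.getVert imax)
          have e3 : G.dist (P.getVert (m jmax)) (Q.getVert jmax)
              = G.dist (Q.getVert jmax) (P.getVert (m jmax)) := SimpleGraph.dist_comm ..
          have e4 : G.dist (Q.getVert jmax) (P.getVert imax)
              = G.dist (P.getVert imax) (Q.getVert jmax) := SimpleGraph.dist_comm ..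
          omega
    have hlow := dist_getVert_ge hG P hP (haLen n) (haLen (n+1))
    omega
  -- apply discrete IVT
  obtain ⟨n, hn, hb1, hb2⟩ := chain_ivt k a N i (by omega) (by omega) hstep
  obtain ⟨j, hj⟩ := haNear n hn
  -- conclude
  have hdist : G.dist (P.getVert i) (P.getVert (a n)) ≤ k := by
    have := dist_getVert_le' hG P i (a n)
    omega
  have t := hG.dist_triangle (u := P.getVert i) (v := P.getVert (a n)) (w := Q.getVert j)
  exact walkDist_le_of (getVert_mem_support' Q j) (by omega)
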